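/- arXiv:2107.02166 — 11 statements merged into one kernel-verified Lean document; each statement's English description precedes it below -/
import Mathlib

section
/- Let X be a compact Hausdorff space and α: X → X a continuous map with essential set X_α. Then α(X_α) = X_α. -/
open MeasureTheory

/-- The essential set of a continuous map `α`: points all of whose open neighborhoods
have positive measure for some `α`-invariant regular Borel probability measure. -/
def essentialSet {X : Type*} [TopologicalSpace X] [MeasurableSpace X] (α : X → X) : Set X :=
  {x : X | ∀ V : Set X, IsOpen V → x ∈ V →
    ∃ μ : Measure X, IsProbabilityMeasure μ ∧ μ.Regular ∧ μ.map α = μ ∧ 0 < μ V}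

/-- The support of a measure: points all of whose open neighborhoods have positive measure. -/
def msupp {X : Type*} [TopologicalSpace X] [MeasurableSpace X] (μ : Measure X) : Set X :=
  {x : X | ∀ U : Set X, IsOpen U → x ∈ U → 0 < μ U}

lemma isOpen_compl_msupp {X : Type*} [TopologicalSpace X] [MeasurableSpace X]
    (μ : Measure X) : IsOpen (msupp μ)ᶜ := by
  rw [isOpen_iff_forall_mem_open]
  intro x hx
  simp only [msupp, Set.mem_compl_iff, Set.mem_setOf_eq, not_forall] at hx
  obtain ⟨U, hU, hxU, hμU⟩ := hx
  refine ⟨U, fun y hy => ?_, hU, hxU⟩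
  simp only [msupp, Set.mem_compl_iff, Set.mem_setOf_eq, not_forall]
  exact ⟨U, hU, hy, hμU⟩

lemma measure_compl_msupp {X : Type*} [TopologicalSpace X] [CompactSpace X]
    [MeasurableSpace X] (μ : Measure X) (hreg : μ.Regular) : μ (msupp μ)ᶜ = 0 := by
  by_contra h
  obtain ⟨K, hKU, hKc, hK⟩ := hreg.innerRegular (isOpen_compl_msupp μ) 0 (pos_iff_ne_zero.mpr h)
  -- every point of K has a null open neighborhood
  have hcov : ∀ x ∈ K, ∃ U : Set X, IsOpen U ∧ x ∈ U ∧ μ U = 0 := by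
    intro x hx
    have := hKU hx
    simp only [msupp, Set.mem_compl_iff, Set.mem_setOf_eq, not_forall, not_lt] at this
    obtain ⟨U, hU, hxU, hμU⟩ := this
    exact ⟨U, hU, hxU, le_antisymm hμU zero_le⟩
  choose U hUo hxU hU0 using hcov
  obtain ⟨t, ht⟩ := hKc.elim_nhds_subcover' (fun x hx => U x hx)
    (fun x hx => (hUo x hx).mem_nhds (hxU x hx))
  have : μ K ≤ ∑ x ∈ t, μ (U x x.2) :=
    le_trans (measure_mono ht) (measure_biUnion_finset_le t _)
  simp only [hU0] at this
  simp only [Finset.sum_const_zero, nonpos_iff_eq_zero] at this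
  exact absurd this (ne_of_gt hK)

lemma msupp_subset_essentialSet {X : Type*} [TopologicalSpace X] [MeasurableSpace X]
    {α : X → X} {μ : Measure X} (hp : IsProbabilityMeasure μ) (hr : μ.Regular)
    (hinv : μ.map α = μ) : msupp μ ⊆ essentialSet α :=
  fun _x hx V hV hxV => ⟨μ, hp, hr, hinv, hx V hV hxV⟩

theorem essentialSet_image_eq
    {X : Type*} [TopologicalSpace X] [CompactSpace X] [T2Space X]
    [MeasurableSpace X] [BorelSpace X]
    (α : X → X) (hα : Continuous α) :
    α '' essentialSet α = essentialSet α := by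
  apply Set.Subset.antisymm
  · -- α(X_α) ⊆ X_α
    rintro _ ⟨x, hx, rfl⟩
    intro V hV hxV
    obtain ⟨μ, hp, hr, hinv, hpos⟩ := hx (α ⁻¹' V) (hV.preimage hα) hxV
    refine ⟨μ, hp, hr, hinv, ?_⟩
    rwa [← hinv, Measure.map_apply hα.measurable hV.measurableSet]
  · -- X_α ⊆ α(X_α)
    intro x hx
    by_contra hxi
    -- essentialSet is closed
    have hclosed : IsClosed (essentialSet α) := by
      rw [← isOpen_compl_iff, isOpen_iff_forall_mem_open]
      intro y hy
      simp only [essentialSet, Set.mem_compl_iff, Set.mem_setOf_eq, not_forall] at hy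
      obtain ⟨V, hV, hyV, hne⟩ := hy
      refine ⟨V, fun z hz => ?_, hV, hyV⟩
      simp only [essentialSet, Set.mem_compl_iff, Set.mem_setOf_eq, not_forall]
      exact ⟨V, hV, hz, hne⟩
    have himc : IsClosed (α '' essentialSet α) :=
      (hclosed.isCompact.image hα).isClosed
    obtain ⟨V, hV, hxV, hVd⟩ : ∃ V : Set X, IsOpen V ∧ x ∈ V ∧
        V ∩ α '' essentialSet α = ∅ := by
      refine ⟨(α '' essentialSet α)ᶜ, himc.isOpen_compl, hxi, ?_⟩
      simp [Set.inter_comm, Set.inter_compl_self]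
    obtain ⟨μ, hp, hr, hinv, hpos⟩ := hx V hV hxV
    -- μ (α ⁻¹' V) = μ V > 0
    have hpre : 0 < μ (α ⁻¹' V) := by
      rwa [← hinv, Measure.map_apply hα.measurable hV.measurableSet] at hpos
    -- but α ⁻¹' V ∩ msupp μ = ∅
    have hd : α ⁻¹' V ⊆ (msupp μ)ᶜ := by
      intro z hz
      intro hzs
      have hzE : z ∈ essentialSet α := msupp_subset_essentialSet hp hr hinv hzs
      have : α z ∈ V ∩ α '' essentialSet α := ⟨hz, ⟨z, hzE, rfl⟩⟩
      rw [hVd] at this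
      exact this
    have : μ (α ⁻¹' V) = 0 :=
      le_antisymm (le_trans (measure_mono hd) (measure_compl_msupp μ hr).le) zero_le
    exact absurd this (ne_of_gt hpre)
end

section
/- Let X be a compact metric space, α: X → X continuous, and x ∈ X. If for every open neighborhood V of x there exists y ∈ X with limsup_{n→∞} (1/n)·#{0 ≤ k < n : α^k(y) ∈ V} > 0, then x is essential, i.e., every open neighborhood of x has positive measure for some α-invariant Borel probability measure. -/
open MeasureTheory Filter BoundedContinuousFunction Set
open scoped Classical NNReal ENNReal Topology

noncomputable section
set_option linter.unusedSectionVars false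

namespace EssAux

variable {X : Type*} [MetricSpace X] [CompactSpace X]
variable (α : X → X) (y : X)

/-- Empirical average of `f` along the first `n` iterates of `y`. -/
def A (n : ℕ) (f : X →ᵇ ℝ≥0) : ℝ≥0 :=
  (∑ k ∈ Finset.range n, f (α^[k] y)) / n

lemma A_le (n : ℕ) (f : X →ᵇ ℝ≥0) : A α y n f ≤ nndist f 0 := by
  have hs : ∑ k ∈ Finset.range n, f (α^[k] y) ≤ n * nndist f 0 := by
    calc ∑ k ∈ Finset.range n, f (α^[k] y)
        ≤ ∑ _k ∈ Finset.range n, nndist f 0 :=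
          Finset.sum_le_sum fun k _ => BoundedContinuousFunction.NNReal.upper_bound f _
      _ = n * nndist f 0 := by simp [Finset.sum_const, mul_comm]
  rcases Nat.eq_zero_or_pos n with h | h
  · simp [A, h]
  · rw [A, div_le_iff₀ (by exact_mod_cast h : (0:ℝ≥0) < n)]
    calc ∑ k ∈ Finset.range n, f (α^[k] y) ≤ n * nndist f 0 := hs
      _ = nndist f 0 * n := mul_comm _ _

lemma A_add (n : ℕ) (f g : X →ᵇ ℝ≥0) : A α y n (f + g) = A α y n f + A α y n g := by
  simp [A, Finset.sum_add_distrib, add_div]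

lemma A_smul (n : ℕ) (r : ℝ≥0) (f : X →ᵇ ℝ≥0) : A α y n (r • f) = r * A α y n f := by
  simp only [A, BoundedContinuousFunction.coe_smul, Pi.smul_apply, smul_eq_mul]
  rw [← Finset.mul_sum, mul_div_assoc]

lemma A_mono (n : ℕ) {f g : X →ᵇ ℝ≥0} (h : ∀ z, f z ≤ g z) : A α y n f ≤ A α y n g := by
  rw [A, A, div_eq_mul_inv, div_eq_mul_inv]
  exact mul_le_mul_left (Finset.sum_le_sum fun k _ => h _) _

variable (U : Ultrafilter ℕ)

lemma exists_lim (f : X →ᵇ ℝ≥0) : ∃ L, Tendsto (fun n => A α y n f) U (𝓝 L) := by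
  have hc : IsCompact (Set.Icc (0 : ℝ≥0) (nndist f 0)) := isCompact_Icc
  obtain ⟨L, -, hL⟩ := hc.ultrafilter_le_nhds (U.map fun n => A α y n f) (by
    rw [le_principal_iff]
    exact Ultrafilter.mem_map.mpr (Eventually.of_forall fun n => ⟨by positivity, A_le α y n f⟩))
  exact ⟨L, hL⟩

/-- The ultrafilter limit of empirical averages. -/
def Lam (f : X →ᵇ ℝ≥0) : ℝ≥0 := (exists_lim α y U f).choose

lemma tendsto_Lam (f : X →ᵇ ℝ≥0) :
    Tendsto (fun n => A α y n f) U (𝓝 (Lam α y U f)) :=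
  (exists_lim α y U f).choose_spec

lemma Lam_unique {f : X →ᵇ ℝ≥0} {L : ℝ≥0}
    (h : Tendsto (fun n => A α y n f) U (𝓝 L)) : Lam α y U f = L :=
  tendsto_nhds_unique (tendsto_Lam α y U f) h

lemma Lam_add (f g : X →ᵇ ℝ≥0) :
    Lam α y U (f + g) = Lam α y U f + Lam α y U g :=
  Lam_unique α y U <| by
    have := (tendsto_Lam α y U f).add (tendsto_Lam α y U g)
    exact Tendsto.congr (fun n => (A_add α y n f g).symm) this

lemma Lam_smul (r : ℝ≥0) (f : X →ᵇ ℝ≥0) :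
    Lam α y U (r • f) = r * Lam α y U f :=
  Lam_unique α y U <| by
    have := (tendsto_Lam α y U f).const_mul r
    exact Tendsto.congr (fun n => (A_smul α y n r f).symm) this

lemma Lam_mono {f g : X →ᵇ ℝ≥0} (h : ∀ z, f z ≤ g z) :
    Lam α y U f ≤ Lam α y U g :=
  le_of_tendsto_of_tendsto' (tendsto_Lam α y U f) (tendsto_Lam α y U g)
    fun n => A_mono α y n h

lemma Lam_one (hU : (U : Filter ℕ) ≤ atTop) : Lam α y U 1 = 1 :=
  Lam_unique α y U <| by
    have h1 : ∀ n : ℕ, 1 ≤ n → A α y n 1 = 1 := by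
      intro n hn
      have : (n : ℝ≥0) ≠ 0 := by exact_mod_cast (Nat.one_le_iff_ne_zero.mp hn)
      simp [A, div_self this]
    refine Tendsto.congr' ?_ tendsto_const_nhds
    filter_upwards [hU (eventually_ge_atTop 1)] with n hn
    exact (h1 n hn).symm

lemma sum_shift (f : X →ᵇ ℝ≥0) (n : ℕ) :
    (∑ k ∈ Finset.range n, f (α^[k + 1] y)) + f y
      = (∑ k ∈ Finset.range n, f (α^[k] y)) + f (α^[n] y) := by
  have h1 : ∑ k ∈ Finset.range (n + 1), f (α^[k] y)
      = (∑ k ∈ Finset.range n, f (α^[k + 1] y)) + f (α^[0] y) :=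
    Finset.sum_range_succ' _ n
  have h2 : ∑ k ∈ Finset.range (n + 1), f (α^[k] y)
      = (∑ k ∈ Finset.range n, f (α^[k] y)) + f (α^[n] y) :=
    Finset.sum_range_succ _ n
  simpa using h1.symm.trans h2

lemma dist_A_comp_le (hα : Continuous α) (f : X →ᵇ ℝ≥0) (n : ℕ) :
    dist (A α y n f) (A α y n (f.compContinuous ⟨α, hα⟩)) ≤ 2 * (nndist f 0 : ℝ) / n := by
  rcases Nat.eq_zero_or_pos n with rfl | hn
  · simp [A]
  have hnR : (0 : ℝ) < n := by exact_mod_cast hn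
  set S := ∑ k ∈ Finset.range n, f (α^[k] y) with hS
  set T := ∑ k ∈ Finset.range n, (f.compContinuous ⟨α, hα⟩) (α^[k] y) with hT
  have hTS : (T : ℝ) + f y = (S : ℝ) + f (α^[n] y) := by
    have hT' : T = ∑ k ∈ Finset.range n, f (α^[k + 1] y) := by
      apply Finset.sum_congr rfl
      intro k _
      simp [Function.iterate_succ_apply']
    rw [hT']
    exact_mod_cast congrArg (fun z : ℝ≥0 => (z : ℝ)) (sum_shift α y f n)
  have hA1 : (A α y n f : ℝ) = (S : ℝ) / n := by
    rw [hS, A, NNReal.coe_div, NNReal.coe_natCast]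
  have hA2 : (A α y n (f.compContinuous ⟨α, hα⟩) : ℝ) = (T : ℝ) / n := by
    rw [hT, A, NNReal.coe_div, NNReal.coe_natCast]
  rw [NNReal.dist_eq, hA1, hA2]
  have key : (S : ℝ) / n - (T : ℝ) / n = ((f y : ℝ) - f (α^[n] y)) / n := by
    rw [div_sub_div_same, div_eq_div_iff hnR.ne' hnR.ne']
    nlinarith [hTS]
  rw [key, abs_div, abs_of_nonneg hnR.le]
  have hb : ∀ z : X, (f z : ℝ) ≤ (nndist f 0 : ℝ) := fun z =>
    NNReal.coe_le_coe.mpr (BoundedContinuousFunction.NNReal.upper_bound f z)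
  have hnum : |(f y : ℝ) - f (α^[n] y)| ≤ 2 * (nndist f 0 : ℝ) := by
    rw [abs_sub_le_iff]
    constructor <;> nlinarith [hb y, hb (α^[n] y), (f y).coe_nonneg, (f (α^[n] y)).coe_nonneg]
  gcongr

lemma Lam_comp (hU : (U : Filter ℕ) ≤ atTop) (hα : Continuous α) (f : X →ᵇ ℝ≥0) :
    Lam α y U (f.compContinuous ⟨α, hα⟩) = Lam α y U f := by
  apply Lam_unique
  apply tendsto_of_tendsto_of_dist (tendsto_Lam α y U f)
  apply squeeze_zero (fun n => dist_nonneg) (fun n => dist_A_comp_le α y hα f n)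
  exact (tendsto_const_div_atTop_nhds_zero_nat (2 * (nndist f 0 : ℝ))).mono_left hU

/-- A bounded continuous function as a compactly supported one. -/
def cc (f : X →ᵇ ℝ≥0) : CompactlySupportedContinuousMap X ℝ≥0 :=
  ⟨f.toContinuousMap, (isClosed_tsupport _).isCompact⟩

@[simp] lemma cc_apply (f : X →ᵇ ℝ≥0) (z : X) : cc f z = f z := rfl

/-- The empirical-limit functional as a linear map. -/
def LamLM : CompactlySupportedContinuousMap X ℝ≥0 →ₗ[ℝ≥0] ℝ≥0 where
  toFun := fun g => Lam α y U (mkOfCompact g.toContinuousMap)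
  map_add' := fun f g => by
    rw [← Lam_add]
    congr 1
  map_smul' := fun r f => by
    simp only [RingHom.id_apply, smul_eq_mul]
    rw [← Lam_smul]
    congr 1

lemma LamLM_apply (f : X →ᵇ ℝ≥0) : LamLM α y U (cc f) = Lam α y U f := rfl

open TopologicalSpace in
lemma sup_disjoint_aux (K₁ K₂ : Compacts X) (hd : Disjoint (K₁ : Set X) K₂) :
    rieszContentAux (LamLM α y U) (K₁ ⊔ K₂)
      = rieszContentAux (LamLM α y U) K₁ + rieszContentAux (LamLM α y U) K₂ := by
  refine le_antisymm (rieszContentAux_sup_le _ K₁ K₂) ?_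
  rw [rieszContentAux]
  apply le_csInf (rieszContentAux_image_nonempty _ _)
  rintro b ⟨f', hf, rfl⟩
  obtain ⟨f, rfl⟩ : ∃ f : X →ᵇ ℝ≥0, cc f = f' := ⟨mkOfCompact f'.toContinuousMap, rfl⟩
  obtain ⟨g, hg2, hg1, hg01⟩ := exists_continuous_zero_one_of_isClosed
    K₂.isCompact.isClosed K₁.isCompact.isClosed hd.symm
  set gN : C(X, ℝ≥0) := ⟨fun z => Real.toNNReal (g z),
    continuous_real_toNNReal.comp g.continuous⟩ with hgN
  set gN' : C(X, ℝ≥0) := ⟨fun z => Real.toNNReal (1 - g z),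
    continuous_real_toNNReal.comp (continuous_const.sub g.continuous)⟩ with hgN'
  set h₁ : X →ᵇ ℝ≥0 := mkOfCompact (f.toContinuousMap * gN) with hh₁
  set h₂ : X →ᵇ ℝ≥0 := mkOfCompact (f.toContinuousMap * gN') with hh₂
  have happly₁ : ∀ z, h₁ z = f z * Real.toNNReal (g z) := fun z => rfl
  have happly₂ : ∀ z, h₂ z = f z * Real.toNNReal (1 - g z) := fun z => rfl
  have hsum : h₁ + h₂ = f := by
    ext z
    have h0 : (0 : ℝ) ≤ g z := (hg01 z).1
    have h1 : g z ≤ 1 := (hg01 z).2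
    have hg : Real.toNNReal (g z) + Real.toNNReal (1 - g z) = 1 := by
      apply NNReal.coe_injective
      push_cast
      rw [Real.coe_toNNReal _ h0, Real.coe_toNNReal _ (by linarith)]
      ring
    have hzz : h₁ z + h₂ z = f z := by
      rw [happly₁, happly₂, ← mul_add, hg, mul_one]
    simp only [BoundedContinuousFunction.coe_add, Pi.add_apply]
    exact_mod_cast hzz
  have hK1 : ∀ z ∈ K₁, (1 : ℝ≥0) ≤ h₁ z := by
    intro z hz
    have hz1 : g z = 1 := hg1 hz
    rw [happly₁, hz1]
    simpa using hf z (Or.inl hz)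
  have hK2 : ∀ z ∈ K₂, (1 : ℝ≥0) ≤ h₂ z := by
    intro z hz
    have hz0 : g z = 0 := hg2 hz
    rw [happly₂, hz0]
    simpa using hf z (Or.inr hz)
  calc rieszContentAux (LamLM α y U) K₁ + rieszContentAux (LamLM α y U) K₂
      ≤ LamLM α y U (cc h₁) + LamLM α y U (cc h₂) :=
        add_le_add (rieszContentAux_le _ (f := cc h₁) hK1) (rieszContentAux_le _ (f := cc h₂) hK2)
    _ = LamLM α y U (cc (h₁ + h₂)) := by rw [LamLM_apply, LamLM_apply, LamLM_apply, Lam_add]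
    _ = LamLM α y U (cc f) := by rw [hsum]

/-- The Riesz content associated to the averaging functional. -/
def rContent : Content X where
  toFun := rieszContentAux (LamLM α y U)
  mono' := fun _ _ h => rieszContentAux_mono _ h
  sup_disjoint' := fun K₁ K₂ hd _ _ => sup_disjoint_aux α y U K₁ K₂ hd
  sup_le' := rieszContentAux_sup_le _

lemma rContent_apply (K : TopologicalSpace.Compacts X) :
    rContent α y U K = (rieszContentAux (LamLM α y U) K : ℝ≥0∞) := rfl


section MeasureSec

variable [MeasurableSpace X] [BorelSpace X]

lemma measure_univ_one (hU : (U : Filter ℕ) ≤ atTop) :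
    (rContent α y U).measure univ = 1 := by
  rw [(rContent α y U).measure_apply MeasurableSet.univ,
    (rContent α y U).outerMeasure_of_isOpen univ isOpen_univ]
  apply le_antisymm
  · refine ((rContent α y U).innerContent_le ⟨univ, isOpen_univ⟩ ⟨univ, isCompact_univ⟩
      subset_rfl).trans ?_
    have h1 : rieszContentAux (LamLM α y U) ⟨univ, isCompact_univ⟩ ≤ LamLM α y U (cc 1) :=
      rieszContentAux_le _ (f := cc 1) (fun z _ => le_of_eq (by simp))
    rw [LamLM_apply, Lam_one α y U hU] at h1
    rw [rContent_apply]
    exact_mod_cast h1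
  · have h1 : (1 : ℝ≥0) ≤ rieszContentAux (LamLM α y U) ⟨univ, isCompact_univ⟩ := by
      apply le_csInf (rieszContentAux_image_nonempty _ _)
      rintro b ⟨f', hf, rfl⟩
      obtain ⟨f, rfl⟩ : ∃ f : X →ᵇ ℝ≥0, cc f = f' := ⟨mkOfCompact f'.toContinuousMap, rfl⟩
      have h2 := Lam_mono α y U (f := 1) (g := f) (fun z => by simpa using hf z trivial)
      rw [Lam_one α y U hU] at h2
      exact h2
    refine le_trans ?_ ((rContent α y U).le_innerContent ⟨univ, isCompact_univ⟩
      ⟨univ, isOpen_univ⟩ subset_rfl)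
    rw [rContent_apply]
    exact_mod_cast h1

lemma measure_le_content (K : TopologicalSpace.Compacts X) :
    (rContent α y U).measure K ≤ (rContent α y U) K := by
  have step : ∀ f : X →ᵇ ℝ≥0, (∀ z ∈ K, 1 ≤ f z) →
      (rContent α y U).measure K ≤ (Lam α y U f : ℝ≥0∞) := by
    intro f hf
    refine ENNReal.le_of_forall_lt_one_mul_le fun a ha => ?_
    rcases eq_or_ne a 0 with rfl | ha0
    · simp
    lift a to ℝ≥0 using ha.ne_top
    have haN : a ≠ 0 := by exact_mod_cast ha0
    have ha1 : a < 1 := by exact_mod_cast ha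
    set Ur : Set X := {z | a < f z} with hUr
    have hUro : IsOpen Ur := isOpen_lt continuous_const f.continuous
    have hKU : (K : Set X) ⊆ Ur := fun z hz => lt_of_lt_of_le ha1 (hf z hz)
    have h2 : (rContent α y U).innerContent ⟨Ur, hUro⟩
        ≤ ((a⁻¹ * Lam α y U f : ℝ≥0) : ℝ≥0∞) := by
      rw [Content.innerContent]
      apply iSup_le; intro M; apply iSup_le; intro hM
      have htest : ∀ z ∈ M, (1 : ℝ≥0) ≤ (a⁻¹ • f) z := by
        intro z hz
        have hz' : a < f z := hM hz
        have h3 : a⁻¹ * a ≤ a⁻¹ * f z := mul_le_mul_right hz'.le _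
        rwa [inv_mul_cancel₀ haN] at h3
      have h4 := rieszContentAux_le (LamLM α y U) (f := cc (a⁻¹ • f)) htest
      rw [LamLM_apply, Lam_smul] at h4
      rw [rContent_apply]
      exact_mod_cast h4
    have h1 : (rContent α y U).measure ↑K ≤ ((a⁻¹ * Lam α y U f : ℝ≥0) : ℝ≥0∞) := by
      refine le_trans (measure_mono hKU) ?_
      rw [(rContent α y U).measure_apply hUro.measurableSet,
        (rContent α y U).outerMeasure_of_isOpen Ur hUro]
      exact h2
    calc (a : ℝ≥0∞) * (rContent α y U).measure ↑K
        ≤ a * ((a⁻¹ * Lam α y U f : ℝ≥0) : ℝ≥0∞) := mul_le_mul_right h1 _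
      _ = (((a * (a⁻¹ * Lam α y U f)) : ℝ≥0) : ℝ≥0∞) := by norm_cast
      _ = (Lam α y U f : ℝ≥0∞) := by rw [← mul_assoc, mul_inv_cancel₀ haN, one_mul]
  refine ENNReal.le_of_forall_pos_le_add fun ε hε _ => ?_
  obtain ⟨f', hf, hL⟩ := exists_lt_rieszContentAux_add_pos (LamLM α y U) K hε
  obtain ⟨f, rfl⟩ : ∃ f : X →ᵇ ℝ≥0, cc f = f' := ⟨mkOfCompact f'.toContinuousMap, rfl⟩
  rw [LamLM_apply] at hL
  refine (step f hf).trans ?_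
  rw [rContent_apply, ← ENNReal.coe_add]
  exact_mod_cast le_of_lt hL

lemma content_le_measure (K : TopologicalSpace.Compacts X) :
    (rContent α y U) K ≤ (rContent α y U).measure K := by
  rw [(rContent α y U).measure_apply K.isCompact.isClosed.measurableSet]
  exact (rContent α y U).le_outerMeasure_compacts K

lemma content_preimage_le (hα : Continuous α) (hU : (U : Filter ℕ) ≤ atTop)
    (K : TopologicalSpace.Compacts X) :
    rieszContentAux (LamLM α y U)
        ⟨α ⁻¹' K, (K.isCompact.isClosed.preimage hα).isCompact⟩
      ≤ rieszContentAux (LamLM α y U) K := by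
  apply le_csInf (rieszContentAux_image_nonempty _ _)
  rintro b ⟨f', hf, rfl⟩
  obtain ⟨f, rfl⟩ : ∃ f : X →ᵇ ℝ≥0, cc f = f' := ⟨mkOfCompact f'.toContinuousMap, rfl⟩
  have htest : ∀ z ∈ (⟨α ⁻¹' K, (K.isCompact.isClosed.preimage hα).isCompact⟩ :
      TopologicalSpace.Compacts X), (1 : ℝ≥0) ≤ (f.compContinuous ⟨α, hα⟩) z := by
    intro z hz
    show (1 : ℝ≥0) ≤ f (α z)
    exact hf (α z) hz
  have h5 := rieszContentAux_le (LamLM α y U) (f := cc (f.compContinuous ⟨α, hα⟩)) htest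
  rwa [LamLM_apply, Lam_comp α y U hU hα, ← LamLM_apply] at h5

lemma measure_preimage_le (hα : Continuous α) (hU : (U : Filter ℕ) ≤ atTop)
    {E : Set X} (hE : MeasurableSet E) :
    (rContent α y U).measure (α ⁻¹' E) ≤ (rContent α y U).measure E := by
  haveI : IsFiniteMeasure (rContent α y U).measure :=
    ⟨by rw [measure_univ_one α y U hU]; exact ENNReal.one_lt_top⟩
  haveI : (rContent α y U).measure.InnerRegular := by infer_instance
  refine le_of_forall_lt fun r hr => ?_
  obtain ⟨M, hME, hMc, hrM⟩ := (hE.preimage hα.measurable).exists_lt_isCompact hr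
  refine hrM.trans_le ?_
  have himg : α '' M ⊆ E := by
    rintro _ ⟨z, hz, rfl⟩
    exact hME hz
  calc (rContent α y U).measure M
      ≤ (rContent α y U).measure (α ⁻¹' (α '' M)) :=
        measure_mono (subset_preimage_image α M)
    _ ≤ (rContent α y U) ⟨α ⁻¹' (α '' M),
          (((hMc.image hα).isClosed.preimage hα)).isCompact⟩ :=
        measure_le_content α y U _
    _ ≤ (rContent α y U) ⟨α '' M, hMc.image hα⟩ := by
        rw [rContent_apply, rContent_apply]
        exact_mod_cast content_preimage_le α y U hα hU ⟨α '' M, hMc.image hα⟩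
    _ ≤ (rContent α y U).measure (α '' M) := content_le_measure α y U _
    _ ≤ (rContent α y U).measure E := measure_mono himg

lemma map_measure_eq (hα : Continuous α) (hU : (U : Filter ℕ) ≤ atTop) :
    ((rContent α y U).measure).map α = (rContent α y U).measure := by
  haveI : IsFiniteMeasure (rContent α y U).measure :=
    ⟨by rw [measure_univ_one α y U hU]; exact ENNReal.one_lt_top⟩
  ext E hE
  rw [Measure.map_apply hα.measurable hE]
  have h1 := measure_preimage_le α y U hα hU hE
  have h2 := measure_preimage_le α y U hα hU hE.compl
  rw [preimage_compl] at h2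
  have hadd1 : (rContent α y U).measure (α ⁻¹' E)
      + (rContent α y U).measure ((α ⁻¹' E)ᶜ) = 1 := by
    rw [measure_add_measure_compl (hE.preimage hα.measurable), measure_univ_one α y U hU]
  have hadd2 : (rContent α y U).measure E + (rContent α y U).measure Eᶜ = 1 := by
    rw [measure_add_measure_compl hE, measure_univ_one α y U hU]
  by_contra hne
  have hlt : (rContent α y U).measure (α ⁻¹' E) < (rContent α y U).measure E :=
    lt_of_le_of_ne h1 hne
  have hcontra : (1 : ℝ≥0∞) < 1 := by
    calc (1 : ℝ≥0∞) = _ + _ := hadd1.symm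
      _ < _ + _ := ENNReal.add_lt_add_of_lt_of_le (measure_ne_top _ _) hlt h2
      _ = 1 := hadd2
  exact lt_irrefl _ hcontra

lemma le_content_of_mem {W : Set X} {K : TopologicalSpace.Compacts X}
    (hWK : W ⊆ K) {c : ℝ≥0}
    (hmem : {n : ℕ |
        c ≤ (((Finset.range n).filter fun k => α^[k] y ∈ W).card : ℝ≥0) / (n : ℝ≥0)} ∈ U) :
    c ≤ rieszContentAux (LamLM α y U) K := by
  apply le_csInf (rieszContentAux_image_nonempty _ _)
  rintro b ⟨f', hf, rfl⟩
  obtain ⟨f, rfl⟩ : ∃ f : X →ᵇ ℝ≥0, cc f = f' := ⟨mkOfCompact f'.toContinuousMap, rfl⟩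
  rw [LamLM_apply]
  refine ge_of_tendsto (tendsto_Lam α y U f) ?_
  filter_upwards [hmem] with n hn
  refine hn.trans ?_
  rw [A, div_eq_mul_inv, div_eq_mul_inv]
  apply mul_le_mul_left
  calc (((Finset.range n).filter fun k => α^[k] y ∈ W).card : ℝ≥0)
      = ∑ _k ∈ (Finset.range n).filter fun k => α^[k] y ∈ W, (1 : ℝ≥0) := by
        rw [Finset.sum_const, nsmul_eq_mul, mul_one]
    _ ≤ ∑ k ∈ (Finset.range n).filter fun k => α^[k] y ∈ W, f (α^[k] y) :=
        Finset.sum_le_sum fun k hk => hf _ (hWK (Finset.mem_filter.mp hk).2)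
    _ ≤ ∑ k ∈ Finset.range n, f (α^[k] y) :=
        Finset.sum_le_sum_of_subset (Finset.filter_subset _ _)

end MeasureSec

end EssAux

theorem essential_of_limsup_empirical_pos
    {X : Type*} [MetricSpace X] [CompactSpace X]
    [MeasurableSpace X] [BorelSpace X]
    (α : X → X) (hα : Continuous α) (x : X)
    (h : ∀ V : Set X, IsOpen V → x ∈ V → ∃ y : X,
      0 < limsup (fun n : ℕ =>
        (((Finset.range n).filter (fun k => α^[k] y ∈ V)).card : ℝ) / (n : ℝ)) atTop) :
    ∀ V : Set X, IsOpen V → x ∈ V →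
      ∃ μ : Measure X, IsProbabilityMeasure μ ∧ μ.map α = μ ∧ 0 < μ V := by
  intro V hV hxV
  obtain ⟨r, hr0, hrV⟩ : ∃ r > 0, Metric.closedBall x r ⊆ V :=
    (Metric.nhds_basis_closedBall.mem_iff).1 (hV.mem_nhds hxV)
  obtain ⟨y, hy⟩ := h (Metric.ball x r) Metric.isOpen_ball (Metric.mem_ball_self hr0)
  set b : ℕ → ℝ := fun n =>
    (((Finset.range n).filter fun k => α^[k] y ∈ Metric.ball x r).card : ℝ) / n with hbdef
  have hb0 : ∀ n, 0 ≤ b n := fun n => by positivity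
  set L : ℝ := limsup b atTop with hLdef
  have hL : 0 < L := hy
  have hfreq : ∃ᶠ n in atTop, L / 2 < b n :=
    frequently_lt_of_lt_limsup (isCoboundedUnder_le_of_le atTop hb0) (by linarith)
  haveI hneBot : (atTop ⊓ 𝓟 {n : ℕ | L / 2 < b n}).NeBot :=
    frequently_iff_neBot.mp hfreq
  set U : Ultrafilter ℕ := Ultrafilter.of (atTop ⊓ 𝓟 {n : ℕ | L / 2 < b n}) with hUdef
  have hle := Ultrafilter.of_le (atTop ⊓ 𝓟 {n : ℕ | L / 2 < b n})
  have hU : (U : Filter ℕ) ≤ atTop := hle.trans inf_le_left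
  have hS : {n : ℕ | L / 2 < b n} ∈ U :=
    hle (le_principal_iff.mp inf_le_right)
  set cN : ℝ≥0 := (L / 2).toNNReal with hcNdef
  have hcN : 0 < cN := Real.toNNReal_pos.mpr (by linarith)
  have hmem : {n : ℕ | cN ≤ (((Finset.range n).filter
      fun k => α^[k] y ∈ Metric.ball x r).card : ℝ≥0) / (n : ℝ≥0)} ∈ U := by
    refine mem_of_superset hS fun n hn => ?_
    have hn' : L / 2 < b n := hn
    rw [Set.mem_setOf_eq, ← NNReal.coe_le_coe]
    rw [NNReal.coe_div, NNReal.coe_natCast, NNReal.coe_natCast,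
      Real.coe_toNNReal _ (by linarith : (0:ℝ) ≤ L / 2)]
    exact hn'.le
  set K₀ : TopologicalSpace.Compacts X :=
    ⟨Metric.closedBall x r, isCompact_closedBall x r⟩ with hK₀def
  have hcontent : cN ≤ rieszContentAux (EssAux.LamLM α y U) K₀ :=
    EssAux.le_content_of_mem α y U (Metric.ball_subset_closedBall) hmem
  refine ⟨(EssAux.rContent α y U).measure, ⟨EssAux.measure_univ_one α y U hU⟩,
    EssAux.map_measure_eq α y U hα hU, ?_⟩
  calc (0 : ℝ≥0∞) < (cN : ℝ≥0∞) := by exact_mod_cast hcN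
    _ ≤ ((rieszContentAux (EssAux.LamLM α y U) K₀ : ℝ≥0) : ℝ≥0∞) := by exact_mod_cast hcontent
    _ = (EssAux.rContent α y U) K₀ := (EssAux.rContent_apply α y U K₀).symm
    _ ≤ (EssAux.rContent α y U).innerContent ⟨V, hV⟩ :=
        (EssAux.rContent α y U).le_innerContent K₀ ⟨V, hV⟩ hrV
    _ = (EssAux.rContent α y U).measure V := by
        rw [(EssAux.rContent α y U).measure_apply hV.measurableSet,
          (EssAux.rContent α y U).outerMeasure_of_isOpen V hV]
end
end

section
/- Let X be a compact metric space, α: X → X continuous, and x ∈ X an essential point. Then for every open neighborhood V of x there exists y ∈ X with liminf_{n→∞} (1/n)·#{0 ≤ k < n : α^k(y) ∈ V} > 0. -/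
open MeasureTheory Filter
open scoped Classical

section Aux

variable {X : Type*} [MeasurableSpace X]

/-- Birkhoff sum. -/
noncomputable def birkS (α : X → X) (h : X → ℝ) (n : ℕ) (y : X) : ℝ :=
  ∑ k ∈ Finset.range n, h (α^[k] y)

/-- Running maximum of Birkhoff sums `birkS α h n y` for `n ≤ N`. -/
noncomputable def maxS (α : X → X) (h : X → ℝ) : ℕ → X → ℝ
  | 0 => fun _ => 0
  | (N + 1) => fun y => max (maxS α h N y) (birkS α h (N + 1) y)

lemma birkS_zero (α : X → X) (h : X → ℝ) (y : X) : birkS α h 0 y = 0 := by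
  simp [birkS]

lemma birkS_succ (α : X → X) (h : X → ℝ) (n : ℕ) (y : X) :
    birkS α h (n + 1) y = h y + birkS α h n (α y) := by
  simp only [birkS]
  rw [Finset.sum_range_succ']
  simp [Function.iterate_succ_apply, add_comm]

lemma maxS_nonneg (α : X → X) (h : X → ℝ) (N : ℕ) (y : X) : 0 ≤ maxS α h N y := by
  induction N with
  | zero => simp [maxS]
  | succ N ih => exact le_trans ih (le_max_left _ _)

lemma birkS_le_maxS (α : X → X) (h : X → ℝ) {n N : ℕ} (hn : n ≤ N) (y : X) :
    birkS α h n y ≤ maxS α h N y := by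
  induction N with
  | zero =>
    interval_cases n
    simp [maxS, birkS_zero]
  | succ N ih =>
    rcases Nat.lt_or_ge n (N + 1) with hlt | hge
    · exact le_trans (ih (Nat.lt_succ_iff.mp hlt)) (le_max_left _ _)
    · have : n = N + 1 := le_antisymm hn hge
      subst this
      exact le_max_right _ _
lemma maxS_eq_birkS (α : X → X) (h : X → ℝ) (N : ℕ) (y : X) :
    ∃ n ≤ N, maxS α h N y = birkS α h n y := by
  induction N with
  | zero => exact ⟨0, le_refl _, by simp [maxS, birkS_zero]⟩
  | succ N ih =>
    rcases le_total (birkS α h (N + 1) y) (maxS α h N y) with hle | hle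
    · obtain ⟨n, hn, heq⟩ := ih
      refine ⟨n, hn.trans (Nat.le_succ _), ?_⟩
      show max (maxS α h N y) (birkS α h (N + 1) y) = _
      rw [max_eq_left hle, heq]
    · refine ⟨N + 1, le_refl _, ?_⟩
      show max (maxS α h N y) (birkS α h (N + 1) y) = _
      rw [max_eq_right hle]

lemma measurable_birkS {α : X → X} (hα : Measurable α) {h : X → ℝ} (hh : Measurable h)
    (n : ℕ) : Measurable (birkS α h n) := by
  apply Finset.measurable_sum
  intro k _
  exact hh.comp (hα.iterate k)

lemma measurable_maxS {α : X → X} (hα : Measurable α) {h : X → ℝ} (hh : Measurable h)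
    (N : ℕ) : Measurable (maxS α h N) := by
  induction N with
  | zero => exact measurable_const
  | succ N ih => exact ih.max (measurable_birkS hα hh (N + 1))

/-- Maximal-ergodic-type lemma: if for every point some Birkhoff sum of `h` is
positive, then the integral of `h` w.r.t. any invariant probability measure is
nonnegative. -/
lemma integral_nonneg_of_forall_birkS_pos
    {α : X → X} (hα : Measurable α) (μ : Measure X) [IsProbabilityMeasure μ]
    (hmap : μ.map α = μ) {h : X → ℝ} (hh : Measurable h) (hint : Integrable h μ)
    (hpos : ∀ y : X, ∃ n : ℕ, 0 < birkS α h n y) :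
    0 ≤ ∫ y, h y ∂μ := by
  -- integrability facts
  have hint_comp : ∀ g : X → ℝ, Measurable g → Integrable g μ → Integrable (fun y => g (α y)) μ := by
    intro g hg hgi
    have hmp : MeasurePreserving α μ μ := ⟨hα, hmap⟩
    exact (hmp.integrable_comp hg.aestronglyMeasurable).mpr hgi
  have hint_birk : ∀ n, Integrable (birkS α h n) μ := by
    intro n
    induction n with
    | zero =>
      have he : birkS α h 0 = fun _ => (0 : ℝ) := funext (birkS_zero α h)
      rw [he]; exact integrable_const 0
    | succ n ih =>
      have he : birkS α h (n + 1) = fun y => h y + birkS α h n (α y) :=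
        funext (birkS_succ α h n)
      rw [he]
      exact hint.add (hint_comp _ (measurable_birkS hα hh n) ih)
  have hint_max : ∀ N, Integrable (maxS α h N) μ := by
    intro N
    induction N with
    | zero => exact integrable_const 0
    | succ N ih =>
      have h1 := ih.sup (hint_birk (N + 1))
      have he : maxS α h (N + 1) = fun y => (maxS α h N ⊔ birkS α h (N + 1)) y := by
        funext y
        show max _ _ = _
        rw [Pi.sup_apply]
      rw [he]
      exact h1
  -- the sets A N
  set A : ℕ → Set X := fun N => {y | 0 < maxS α h N y} with hA
  have hAmeas : ∀ N, MeasurableSet (A N) :=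
    fun N => measurableSet_lt measurable_const (measurable_maxS hα hh N)
  have hAmono : Monotone A := by
    intro N M hNM y hy
    have key : maxS α h N y ≤ maxS α h M y := by
      obtain ⟨n, hn, heq⟩ := maxS_eq_birkS α h N y
      rw [heq]
      exact birkS_le_maxS α h (hn.trans hNM) y
    exact lt_of_lt_of_le hy key
  have hAunion : (⋃ N, A N) = Set.univ := by
    ext y
    simp only [Set.mem_iUnion, Set.mem_univ, iff_true]
    obtain ⟨n, hn⟩ := hpos y
    exact ⟨n, lt_of_lt_of_le hn (birkS_le_maxS α h (le_refl n) y)⟩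
  -- key pointwise inequality on A N
  have hkey : ∀ N, ∀ y ∈ A N, maxS α h N y - maxS α h N (α y) ≤ h y := by
    intro N y hy
    have hy' : 0 < maxS α h N y := hy
    obtain ⟨n, hn, heq⟩ := maxS_eq_birkS α h N y
    rcases n with _ | m
    · exfalso
      rw [heq, birkS_zero] at hy'
      exact lt_irrefl _ hy'
    · have h1 : birkS α h (m + 1) y = h y + birkS α h m (α y) := birkS_succ α h m y
      have h2 : birkS α h m (α y) ≤ maxS α h N (α y) :=
        birkS_le_maxS α h (le_trans (Nat.le_succ m) hn) (α y)
      rw [heq, h1]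
      linarith
  -- integral of maxS ∘ α equals integral of maxS
  have hcomp_int : ∀ N, ∫ y, maxS α h N (α y) ∂μ = ∫ y, maxS α h N y ∂μ := by
    intro N
    have := integral_map (μ := μ) hα.aemeasurable
      (f := maxS α h N) (measurable_maxS hα hh N).aestronglyMeasurable
    rw [hmap] at this
    exact this.symm
  -- the maximal inequality : ∫_{A N} h ≥ 0
  have hineq : ∀ N, 0 ≤ ∫ y in A N, h y ∂μ := by
    intro N
    have step1 : ∫ y in A N, (maxS α h N y - maxS α h N (α y)) ∂μ ≤ ∫ y in A N, h y ∂μ := by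
      refine setIntegral_mono_on ((hint_max N).sub (hint_comp _ (measurable_maxS hα hh N)
        (hint_max N))).integrableOn hint.integrableOn (hAmeas N) ?_
      exact hkey N
    have step2 : ∫ y in A N, (maxS α h N y - maxS α h N (α y)) ∂μ
        = ∫ y in A N, maxS α h N y ∂μ - ∫ y in A N, maxS α h N (α y) ∂μ :=
      integral_sub (hint_max N).integrableOn
        ((hint_comp _ (measurable_maxS hα hh N) (hint_max N))).integrableOn
    have step3 : ∫ y in A N, maxS α h N y ∂μ = ∫ y, maxS α h N y ∂μ := by
      rw [← integral_indicator (hAmeas N)]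
      congr 1
      funext y
      by_cases hy : y ∈ A N
      · simp [Set.indicator_of_mem hy]
      · have h0 : maxS α h N y = 0 :=
          le_antisymm (not_lt.mp hy) (maxS_nonneg α h N y)
        simp [Set.indicator_of_notMem hy, h0]
    have step4 : ∫ y in A N, maxS α h N (α y) ∂μ ≤ ∫ y, maxS α h N (α y) ∂μ :=
      setIntegral_le_integral (hint_comp _ (measurable_maxS hα hh N) (hint_max N))
        (Filter.Eventually.of_forall fun y => maxS_nonneg α h N (α y))
    have : 0 ≤ ∫ y in A N, (maxS α h N y - maxS α h N (α y)) ∂μ := by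
      rw [step2, step3]
      have := hcomp_int N
      linarith
    linarith
  -- pass to the limit
  have htend : Tendsto (fun N => ∫ y in A N, h y ∂μ) atTop (nhds (∫ y in ⋃ N, A N, h y ∂μ)) :=
    tendsto_setIntegral_of_monotone hAmeas hAmono (by rw [hAunion]; exact hint.integrableOn)
  have hfin : (0 : ℝ) ≤ ∫ y in ⋃ N, A N, h y ∂μ :=
    le_of_tendsto_of_tendsto' tendsto_const_nhds htend hineq
  rwa [hAunion, setIntegral_univ] at hfin

end Aux

theorem liminf_empirical_pos_of_essential
    {X : Type*} [MetricSpace X] [CompactSpace X]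
    [MeasurableSpace X] [BorelSpace X]
    (α : X → X) (hα : Continuous α) (x : X)
    (hx : ∀ V : Set X, IsOpen V → x ∈ V →
      ∃ μ : Measure X, IsProbabilityMeasure μ ∧ μ.map α = μ ∧ 0 < μ V) :
    ∀ V : Set X, IsOpen V → x ∈ V → ∃ y : X,
      0 < liminf (fun n : ℕ =>
        (((Finset.range n).filter (fun k => α^[k] y ∈ V)).card : ℝ) / (n : ℝ)) atTop := by
  intro V hV hxV
  obtain ⟨μ, hprob, hmap, hμV⟩ := hx V hV hxV
  by_contra hcon
  push_neg at hcon
  -- set up the function h = ε - 1_V with ε = μ(V)/2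
  set a : ℝ := (μ V).toReal with ha
  have hapos : 0 < a := ENNReal.toReal_pos hμV.ne' (measure_ne_top μ V)
  set ε : ℝ := a / 2 with hε
  have hεpos : 0 < ε := by positivity
  set h : X → ℝ := fun y => ε - Set.indicator V (fun _ => (1 : ℝ)) y with hh
  have hhmeas : Measurable h :=
    measurable_const.sub ((measurable_const (a := (1:ℝ))).indicator hV.measurableSet)
  have hhint : Integrable h μ :=
    (integrable_const ε).sub ((integrable_const (1 : ℝ)).indicator hV.measurableSet)
  -- Birkhoff sums of h in terms of the counting function
  have hbirk : ∀ (n : ℕ) (y : X), birkS α h n y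
      = ε * n - (((Finset.range n).filter (fun k => α^[k] y ∈ V)).card : ℝ) := by
    intro n y
    have : ∀ k, h (α^[k] y) = ε - (if α^[k] y ∈ V then (1 : ℝ) else 0) := by
      intro k
      simp [hh, Set.indicator_apply]
    simp only [birkS, this, Finset.sum_sub_distrib, Finset.sum_const, Finset.card_range,
      nsmul_eq_mul]
    rw [Finset.sum_boole]
    ring
  -- each point has a positive Birkhoff sum, by the liminf hypothesis
  have hpos : ∀ y : X, ∃ n : ℕ, 0 < birkS α h n y := by
    intro y
    set u : ℕ → ℝ := fun n =>
      (((Finset.range n).filter (fun k => α^[k] y ∈ V)).card : ℝ) / (n : ℝ) with hu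
    have hbdd : IsBoundedUnder (· ≤ ·) atTop u := by
      refine isBoundedUnder_of ⟨1, fun n => ?_⟩
      rcases Nat.eq_zero_or_pos n with rfl | hn
      · simp [u]
      · have hcard : (((Finset.range n).filter (fun k => α^[k] y ∈ V)).card : ℝ) ≤ n := by
          have h1 := Finset.card_filter_le (Finset.range n) (fun k => α^[k] y ∈ V)
          rw [Finset.card_range] at h1
          exact_mod_cast h1
        have hnpos : (0 : ℝ) < n := by exact_mod_cast hn
        rw [hu]
        exact div_le_one_of_le₀ hcard hnpos.le
    have hlim : liminf u atTop < ε := lt_of_le_of_lt (hcon y) hεpos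
    have hfreq : ∃ᶠ n in atTop, u n < ε := frequently_lt_of_liminf_lt hbdd.isCoboundedUnder_ge hlim
    obtain ⟨n, hn1, hn2⟩ := (hfreq.and_eventually (eventually_ge_atTop 1)).exists
    refine ⟨n, ?_⟩
    rw [hbirk]
    have hnpos : (0 : ℝ) < n := by exact_mod_cast hn2
    have : (((Finset.range n).filter (fun k => α^[k] y ∈ V)).card : ℝ) < ε * n := by
      have := (div_lt_iff₀ hnpos).mp hn1
      linarith
    linarith
  -- apply the maximal-type lemma
  have h0 : 0 ≤ ∫ y, h y ∂μ :=
    integral_nonneg_of_forall_birkS_pos hα.measurable μ hmap hhmeas hhint hpos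
  -- compute the integral: ∫ h = ε - a < 0
  have hcalc : ∫ y, h y ∂μ = ε - a := by
    rw [hh]
    rw [integral_sub (integrable_const ε)
      ((integrable_const (1 : ℝ)).indicator hV.measurableSet)]
    simp only [show (fun _ : X => (1 : ℝ)) = (1 : X → ℝ) from rfl]
    rw [integral_const, integral_indicator_one hV.measurableSet]
    simp [ha, measureReal_def]
  rw [hcalc] at h0
  rw [hε] at h0
  linarith
end

section
/- Let X be a compact metric space and α: X → X a local homeomorphism. Then there exists ε > 0 such that for every n ∈ ℕ and every x ∈ X, the preimage set α^{-n}(x) is (n,ε)-separated, i.e., for any distinct u,v ∈ α^{-n}(x) there exists 0 ≤ i < n with d(α^i(u), α^i(v)) > ε. -/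
theorem preimages_separated
    {X : Type*} [MetricSpace X] [CompactSpace X]
    (α : X → X) (hα : IsLocalHomeomorph α) :
    ∃ ε > (0 : ℝ), ∀ (n : ℕ) (x u v : X), α^[n] u = x → α^[n] v = x → u ≠ v →
      ∃ i < n, ε < dist (α^[i] u) (α^[i] v) := by
  -- choose for each x a partial homeomorph
  choose e hmem hfe using hα
  obtain ⟨δ, hδ, hball⟩ := lebesgue_number_lemma_of_metric (s := (Set.univ : Set X))
    (c := fun x => (e x).source) isCompact_univ (fun x => (e x).open_source)
    (fun x _ => Set.mem_iUnion.2 ⟨x, hmem x⟩)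
  -- uniform injectivity
  have key : ∀ u v : X, dist u v ≤ δ / 2 → α u = α v → u = v := by
    intro u v hd h
    obtain ⟨y, hy⟩ := hball u trivial
    have hu : u ∈ (e y).source := hy (Metric.mem_ball_self hδ)
    have hv : v ∈ (e y).source := hy (by
      rw [Metric.mem_ball, dist_comm]; linarith)
    exact (e y).injOn hu hv (by rw [← hfe y] at *; exact h)
  refine ⟨δ / 2, by linarith, ?_⟩
  -- key induction
  have main : ∀ n (u v : X), α^[n] u = α^[n] v →
      (∀ i < n, dist (α^[i] u) (α^[i] v) ≤ δ / 2) → u = v := by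
    intro n
    induction n with
    | zero => intro u v h _; simpa using h
    | succ n ih =>
      intro u v h hd
      have h1 : α u = α v := by
        apply ih (α u) (α v)
        · rw [← Function.iterate_succ_apply, ← Function.iterate_succ_apply]; exact h
        · intro i hi
          have := hd (i + 1) (by omega)
          rwa [Function.iterate_succ_apply, Function.iterate_succ_apply] at this
      exact key u v (by simpa using hd 0 (by omega)) h1
  intro n x u v hu hv huv
  by_contra hcon
  push_neg at hcon
  exact huv (main n u v (hu.trans hv.symm) fun i hi => le_of_not_gt fun h => by
    exact absurd h (not_lt.2 (hcon i hi)))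
end

section
/- Let X be a compact metric space and α: X → X a non-contracting open local homeomorphism. Then there exists ε > 0 such that whenever x, y ∈ X satisfy d(x, α(y)) < ε, there exists z ∈ α^{-1}(x) with d(z, y) ≤ d(x, α(y)). -/
theorem lifting_of_close_points
    {X : Type*} [MetricSpace X] [CompactSpace X]
    (α : X → X) (hα : IsLocalHomeomorph α) (hopen : IsOpenMap α)
    (hnc : ∃ r > (0 : ℝ), ∀ x y : X, dist x y ≤ r → dist x y ≤ dist (α x) (α y)) :
    ∃ ε > (0 : ℝ), ∀ x y : X, dist x (α y) < ε →
      ∃ z : X, α z = x ∧ dist z y ≤ dist x (α y) := by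
  obtain ⟨r, hr, hnc⟩ := hnc
  by_cases hX : Nonempty X
  swap
  · exact ⟨1, one_pos, fun x => (hX ⟨x⟩).elim⟩
  have hchoice : ∀ y : X, ∃ p : ℝ × ℝ, 0 < p.1 ∧ 0 < p.2 ∧ p.1 ≤ r / 4 ∧
      Metric.ball (α y) p.2 ⊆ α '' Metric.ball y (r / 4) ∧
      ∀ z, dist z y < p.1 → dist (α z) (α y) < p.2 / 2 := by
    intro y
    have hopen' : IsOpen (α '' Metric.ball y (r / 4)) := hopen _ Metric.isOpen_ball
    have hmem : α y ∈ α '' Metric.ball y (r / 4) :=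
      ⟨y, Metric.mem_ball_self (by linarith), rfl⟩
    obtain ⟨e, he, hball⟩ := Metric.isOpen_iff.1 hopen' _ hmem
    obtain ⟨δ, hδ, hcont⟩ := Metric.continuous_iff.1 hα.continuous y (e / 2) (by linarith)
    refine ⟨(min δ (r / 4), e), lt_min hδ (by linarith), he, min_le_right _ _, hball,
      fun z hz => hcont z (lt_of_lt_of_le hz (min_le_left _ _))⟩
  choose p hp1 hp2 hp3 hp4 hp5 using hchoice
  have hcover : (Set.univ : Set X) ⊆ ⋃ y : X, Metric.ball y (p y).1 :=
    fun y _ => Set.mem_iUnion.2 ⟨y, Metric.mem_ball_self (hp1 y)⟩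
  obtain ⟨t, ht⟩ := isCompact_univ.elim_finite_subcover _
    (fun y : X => Metric.isOpen_ball) hcover
  have htne : t.Nonempty := by
    obtain ⟨x⟩ := hX
    have := ht (Set.mem_univ x)
    simp only [Set.mem_iUnion] at this
    obtain ⟨i, hi, _⟩ := this
    exact ⟨i, hi⟩
  refine ⟨t.inf' htne (fun y => (p y).2 / 2), ?_, ?_⟩
  · exact (Finset.lt_inf'_iff htne).2 fun i _ => by linarith [hp2 i]
  intro x y hxy
  have hy := ht (Set.mem_univ y)
  simp only [Set.mem_iUnion] at hy
  obtain ⟨i, hit, hyi⟩ := hy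
  rw [Metric.mem_ball] at hyi
  have h1 : dist (α y) (α i) < (p i).2 / 2 := hp5 i y hyi
  have hle : t.inf' htne (fun y => (p y).2 / 2) ≤ (p i).2 / 2 :=
    Finset.inf'_le _ hit
  have h2 : dist x (α i) < (p i).2 :=
    calc dist x (α i) ≤ dist x (α y) + dist (α y) (α i) := dist_triangle _ _ _
      _ < (p i).2 / 2 + (p i).2 / 2 := by
          have := lt_of_lt_of_le hxy hle
          linarith
      _ = (p i).2 := by ring
  obtain ⟨z, hzball, hzx⟩ := hp4 i (Metric.mem_ball.2 h2)
  rw [Metric.mem_ball] at hzball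
  have hzy : dist z y ≤ r := by
    have h3 : dist i y < r / 4 := lt_of_lt_of_le (dist_comm y i ▸ hyi) (hp3 i)
    calc dist z y ≤ dist z i + dist i y := dist_triangle _ _ _
      _ ≤ r := by linarith
  refine ⟨z, hzx, ?_⟩
  have := hnc z y hzy
  rwa [hzx] at this
end

section
/- Let X be a compact metric space and α: X → X continuous. Suppose that for each pair (n,ε) there exists a finite set F(n,ε) ⊂ X_α such that α^{-n}(F(n,ε)) ∩ X_α is (n,ε)-spanning for X_α and lim_{n→∞} |F(n,ε)|^{1/n} = 1. Then the forward entropy γ(α) := ln lim_{ε→0} limsup_{n→∞} inf{|α^n(E)|^{1/n} : E is (n,ε)-spanning for X_α} equals 0. -/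
open MeasureTheory Filter Topology
open scoped Classical

noncomputable section

/-- `E` is `(n,ε)`-spanning for the essential set `X_α`. -/
def IsSpanning {X : Type*} [MetricSpace X] [MeasurableSpace X]
    (α : X → X) (n : ℕ) (ε : ℝ) (E : Set X) : Prop :=
  ∀ y ∈ essentialSet α, ∃ x ∈ E, ∀ i < n, dist (α^[i] x) (α^[i] y) < ε

lemma isClosed_essentialSet {X : Type*} [TopologicalSpace X] [MeasurableSpace X] (α : X → X) :
    IsClosed (essentialSet α) := by
  rw [← isOpen_compl_iff, isOpen_iff_mem_nhds]
  intro x hx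
  simp only [essentialSet, Set.mem_compl_iff, Set.mem_setOf_eq, not_forall] at hx
  obtain ⟨V, hVopen, hxV, hV⟩ := hx
  refine Filter.mem_of_superset (hVopen.mem_nhds hxV) ?_
  intro z hz
  simp only [essentialSet, Set.mem_compl_iff, Set.mem_setOf_eq, not_forall]
  exact ⟨V, hVopen, hz, hV⟩

/-- Any spanning set contains a finite spanning subset (by compactness of `X_α`). -/
lemma exists_finite_spanning {X : Type*} [MetricSpace X] [CompactSpace X] [MeasurableSpace X]
    (α : X → X) (hα : Continuous α) (n : ℕ) (ε : ℝ) (S : Set X)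
    (hS : IsSpanning α n ε S) :
    ∃ E : Finset X, IsSpanning α n ε ↑E ∧ ↑E ⊆ S := by
  choose x hxS hx using hS
  set U : essentialSet α → Set X := fun y =>
    {z : X | ∀ i < n, dist (α^[i] (x y.1 y.2)) (α^[i] z) < ε} with hU
  have hUopen : ∀ y, IsOpen (U y) := by
    intro y
    have : U y = ⋂ i ∈ Finset.range n, {z : X | dist (α^[i] (x y.1 y.2)) (α^[i] z) < ε} := by
      ext z; simp [hU]
    rw [this]
    refine isOpen_biInter_finset fun i _ => ?_
    exact isOpen_lt (continuous_const.dist (hα.iterate i)) continuous_const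
  have hcompact : IsCompact (essentialSet α) := (isClosed_essentialSet α).isCompact
  have hcover : essentialSet α ⊆ ⋃ y : essentialSet α, U y := by
    intro z hz
    exact Set.mem_iUnion.2 ⟨⟨z, hz⟩, hx z hz⟩
  obtain ⟨t, ht⟩ := hcompact.elim_finite_subcover U hUopen hcover
  refine ⟨t.image (fun y => x y.1 y.2), ?_, ?_⟩
  · intro z hz
    obtain ⟨y, hyt, hyU⟩ := Set.mem_iUnion₂.1 (ht hz)
    exact ⟨x y.1 y.2, by simp [Finset.mem_image]; exact ⟨y, y.2, hyt, rfl⟩, hyU⟩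
  · intro w hw
    simp only [Finset.coe_image, Set.mem_image, Finset.mem_coe] at hw
    obtain ⟨y, _, rfl⟩ := hw
    exact hxS y.1 y.2

/-- Property (*) implies that the forward entropy `γ(α)` vanishes. -/
theorem forwardEntropy_eq_zero_of_property_star
    {X : Type*} [MetricSpace X] [CompactSpace X]
    [MeasurableSpace X] [BorelSpace X]
    (α : X → X) (hα : Continuous α)
    -- Property (*): finite sets `F(n,ε) ⊂ X_α` with `α^{-n}(F(n,ε)) ∩ X_α`
    -- `(n,ε)`-spanning for `X_α` and `|F(n,ε)|^{1/n} → 1`.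
    (hstar : ∀ ε > (0 : ℝ), ∃ F : ℕ → Finset X,
      (∀ n : ℕ, ↑(F n) ⊆ essentialSet α ∧
        IsSpanning α n ε (α^[n] ⁻¹' ↑(F n) ∩ essentialSet α)) ∧
      Tendsto (fun n : ℕ => ((F n).card : ℝ) ^ (1 / (n : ℝ))) atTop (𝓝 1))
    (G : ℝ)
    -- `G = lim_{ε→0} limsup_n inf {|α^n(E)|^{1/n} : E is (n,ε)-spanning for X_α}`
    (hG : Tendsto (fun ε : ℝ => limsup (fun n : ℕ =>
        sInf {c : ℝ | ∃ E : Finset X, IsSpanning α n ε ↑E ∧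
          c = ((E.image (α^[n])).card : ℝ) ^ (1 / (n : ℝ))}) atTop) (𝓝[>] 0) (𝓝 G)) :
    Real.log G = 0 := by
  set S : ℝ → ℕ → Set ℝ := fun ε n => {c : ℝ | ∃ E : Finset X, IsSpanning α n ε ↑E ∧
      c = ((E.image (α^[n])).card : ℝ) ^ (1 / (n : ℝ))} with hSdef
  have hbdd : ∀ ε n, BddBelow (S ε n) := by
    intro ε n
    refine ⟨0, fun c hc => ?_⟩
    obtain ⟨E, _, rfl⟩ := hc
    positivity
  by_cases hne : (essentialSet α).Nonempty
  · -- essential set nonempty: the limsup is 1 for every ε > 0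
    have key : ∀ ε > (0 : ℝ),
        limsup (fun n : ℕ => sInf (S ε n)) atTop = 1 := by
      intro ε hε
      obtain ⟨F, hF, hFlim⟩ := hstar ε hε
      -- a finite spanning set inside the preimage, for each n
      have hEx : ∀ n : ℕ, ∃ E : Finset X, IsSpanning α n ε ↑E ∧
          ↑E ⊆ α^[n] ⁻¹' ↑(F n) ∩ essentialSet α :=
        fun n => exists_finite_spanning α hα n ε _ (hF n).2
      have hlow : ∀ n : ℕ, (1 : ℝ) ≤ sInf (S ε n) := by
        intro n
        have hne' : (S ε n).Nonempty := by
          obtain ⟨E, hE, _⟩ := hEx n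
          exact ⟨_, E, hE, rfl⟩
        refine le_csInf hne' ?_
        rintro c ⟨E, hEspan, rfl⟩
        obtain ⟨y, hy⟩ := hne
        obtain ⟨x, hxE, -⟩ := hEspan y hy
        have hcard : (1 : ℝ) ≤ ((E.image (α^[n])).card : ℝ) := by
          have : (E.image (α^[n])).Nonempty := ⟨α^[n] x, Finset.mem_image_of_mem _ hxE⟩
          exact_mod_cast Finset.card_pos.2 this
        calc (1 : ℝ) = (1 : ℝ) ^ (1 / (n : ℝ)) := (Real.one_rpow _).symm
        _ ≤ ((E.image (α^[n])).card : ℝ) ^ (1 / (n : ℝ)) :=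
          Real.rpow_le_rpow zero_le_one hcard (by positivity)
      have hhigh : ∀ n : ℕ, sInf (S ε n) ≤ ((F n).card : ℝ) ^ (1 / (n : ℝ)) := by
        intro n
        obtain ⟨E, hEspan, hEsub⟩ := hEx n
        have hsub : E.image (α^[n]) ⊆ F n := by
          intro z hz
          obtain ⟨x, hxE, rfl⟩ := Finset.mem_image.1 hz
          exact (hEsub hxE).1
        have h1 : sInf (S ε n) ≤ ((E.image (α^[n])).card : ℝ) ^ (1 / (n : ℝ)) :=
          csInf_le (hbdd ε n) ⟨E, hEspan, rfl⟩
        refine h1.trans (Real.rpow_le_rpow (by positivity) ?_ (by positivity))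
        exact_mod_cast Finset.card_le_card hsub
      have : Tendsto (fun n : ℕ => sInf (S ε n)) atTop (𝓝 1) :=
        tendsto_of_tendsto_of_tendsto_of_le_of_le tendsto_const_nhds hFlim hlow hhigh
      exact this.limsup_eq
    have heq : (fun ε : ℝ => limsup (fun n : ℕ => sInf (S ε n)) atTop)
        =ᶠ[𝓝[>] (0:ℝ)] fun _ => (1 : ℝ) := by
      filter_upwards [self_mem_nhdsWithin] with ε hε
      exact key ε hε
    have : Tendsto (fun _ : ℝ => (1 : ℝ)) (𝓝[>] (0:ℝ)) (𝓝 G) := hG.congr' heq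
    have hG1 : G = 1 := (tendsto_nhds_unique tendsto_const_nhds this).symm
    rw [hG1, Real.log_one]
  · -- essential set empty: the infimum is eventually 0, so G = 0
    have hempty : essentialSet α = ∅ := Set.not_nonempty_iff_eq_empty.1 hne
    have key : ∀ ε : ℝ, ∀ n : ℕ, 1 ≤ n → sInf (S ε n) = 0 := by
      intro ε n hn
      have hmem : (0 : ℝ) ∈ S ε n := by
        refine ⟨∅, ?_, ?_⟩
        · intro y hy; rw [hempty] at hy; exact absurd hy (Set.notMem_empty y)
        · rw [Finset.image_empty, Finset.card_empty]
          rw [Nat.cast_zero, Real.zero_rpow]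
          positivity
      refine le_antisymm (csInf_le (hbdd ε n) hmem) ?_
      exact le_csInf ⟨0, hmem⟩ (fun c hc => by obtain ⟨E, _, rfl⟩ := hc; positivity)
    have hls : ∀ ε : ℝ, limsup (fun n : ℕ => sInf (S ε n)) atTop = 0 := by
      intro ε
      have : (fun n : ℕ => sInf (S ε n)) =ᶠ[atTop] fun _ => (0 : ℝ) := by
        filter_upwards [eventually_ge_atTop 1] with n hn
        exact key ε n hn
      rw [limsup_congr this, limsup_const]
    have : Tendsto (fun _ : ℝ => (0 : ℝ)) (𝓝[>] (0:ℝ)) (𝓝 G) := by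
      exact hG.congr (fun ε => hls ε)
    have hG0 : G = 0 := (tendsto_nhds_unique tendsto_const_nhds this).symm
    rw [hG0, Real.log_zero]
end
end

section
/- Let X be a compact Hausdorff space, α: X → X continuous, and A: C(X) → C(X) a positive linear operator satisfying A((f∘α)·g) = f·Ag for all f,g ∈ C(X). For x ∈ X define φ_x := A*δ_x. If [A1](x) ≠ 0 then the measure ν_x corresponding to φ_x satisfies supp ν_x ⊆ α^{-1}(x). -/
open MeasureTheory

theorem support_of_transfer_functional_subset_fiber
    {X : Type*} [TopologicalSpace X] [CompactSpace X] [T2Space X]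
    [MeasurableSpace X] [BorelSpace X]
    (α : X → X) (hα : Continuous α)
    (A : C(X, ℝ) →ₗ[ℝ] C(X, ℝ))
    (hpos : ∀ f : C(X, ℝ), 0 ≤ f → 0 ≤ A f)
    (hhom : ∀ f g : C(X, ℝ), A ((f.comp ⟨α, hα⟩) * g) = f * A g)
    (x : X) (hx : A 1 x ≠ 0)
    -- `ν` is the regular Borel measure representing the functional `φ_x = A* δ_x`
    (ν : Measure X) (hreg : ν.Regular)
    (hrepr : ∀ f : C(X, ℝ), ∫ y, f y ∂ν = A f x) :
    {z : X | ∀ V : Set X, IsOpen V → z ∈ V → 0 < ν V} ⊆ α ⁻¹' {x} := by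
  haveI : IsFiniteMeasure ν := CompactSpace.isFiniteMeasure
  intro z hz
  by_contra hne
  have hne' : α z ≠ x := hne
  -- Urysohn function: 0 at x, 1 at α z
  obtain ⟨f, hf0, hf1, hf01⟩ := exists_continuous_zero_one_of_isClosed
    (isClosed_singleton (x := x)) (isClosed_singleton (x := α z))
    (Set.disjoint_singleton.mpr (Ne.symm hne'))
  have hfx : f x = 0 := hf0 rfl
  have hfz : f (α z) = 1 := hf1 rfl
  set g : C(X, ℝ) := f.comp ⟨α, hα⟩ with hg
  have hAg : A g x = 0 := by
    have := hhom f 1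
    have h1 : A (g * 1) = f * A 1 := this
    rw [mul_one] at h1
    have := congrArg (fun h => h x) h1
    simp only [ContinuousMap.mul_apply] at this
    rw [this, hfx, zero_mul]
  have hint : ∫ y, g y ∂ν = 0 := by rw [hrepr g, hAg]
  have hgnn : ∀ y, 0 ≤ g y := fun y => (hf01 (α y)).1
  have hgi : Integrable (fun y => g y) ν := g.continuous.integrable_of_hasCompactSupport (HasCompactSupport.of_compactSpace _)
  have hae : (fun y => g y) =ᵐ[ν] 0 :=
    (integral_eq_zero_iff_of_nonneg hgnn hgi).mp hint
  have hnull : ν {y | g y ≠ 0} = 0 := by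
    have := ae_iff.mp hae
    simpa using this
  set V : Set X := α ⁻¹' (f ⁻¹' Set.Ioi (1/2 : ℝ)) with hV
  have hVopen : IsOpen V := (isOpen_Ioi.preimage f.continuous).preimage hα
  have hzV : z ∈ V := by
    simp only [hV, Set.mem_preimage, Set.mem_Ioi, hfz]
    norm_num
  have hVsub : V ⊆ {y | g y ≠ 0} := by
    intro y hy
    simp only [hV, Set.mem_preimage, Set.mem_Ioi] at hy
    simp only [Set.mem_setOf_eq, hg, ContinuousMap.comp_apply, ContinuousMap.coe_mk]
    intro h0
    rw [h0] at hy
    norm_num at hy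
  have := hz V hVopen hzV
  have : ν V = 0 := measure_mono_null hVsub hnull
  exact lt_irrefl _ (this ▸ hz V hVopen hzV)
end

section
/- Let X be a compact Hausdorff space, α: X → X a homeomorphism, and A: C(X) → C(X) a transfer operator (positive, satisfying A((f∘α)g) = f·Ag). Then there exists a nonnegative ρ ∈ C(X) such that Af(x) = ρ(α^{-1}(x))·f(α^{-1}(x)) for all f ∈ C(X) and x ∈ X. -/
theorem transfer_operator_of_homeomorph_is_weighted_shift
    {X : Type*} [TopologicalSpace X] [CompactSpace X] [T2Space X]
    (α : X ≃ₜ X)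
    (A : C(X, ℝ) →ₗ[ℝ] C(X, ℝ))
    (hpos : ∀ f : C(X, ℝ), 0 ≤ f → 0 ≤ A f)
    (hhom : ∀ f g : C(X, ℝ), A ((f.comp (α : C(X, X))) * g) = f * A g) :
    ∃ ρ : C(X, ℝ), 0 ≤ ρ ∧ ∀ (f : C(X, ℝ)) (x : X),
      A f x = ρ (α.symm x) * f (α.symm x) := by
  refine ⟨(A 1).comp (α : C(X, X)), ?_, ?_⟩
  · intro x
    have h1 : (0 : C(X, ℝ)) ≤ A 1 := hpos 1 (by intro x; simp)
    simpa using h1 (α x)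
  · intro f x
    have key : A ((f.comp (α.symm : C(X, X))).comp (α : C(X, X)) * 1)
        = f.comp (α.symm : C(X, X)) * A 1 := hhom _ 1
    have hf : ((f.comp (α.symm : C(X, X))).comp (α : C(X, X)) * 1) = f := by
      ext y; simp
    rw [hf] at key
    rw [key]
    simp [mul_comm]
end

section
/- Let X be a compact Hausdorff space, α: X → X continuous with sup_{x∈X} |α^{-1}(x)| < ∞, and A: C(X) → C(X) a transfer operator given by [Af](x) = Σ_{y ∈ α^{-1}(x)} ρ(y)f(y) with ρ: X → [0,∞). If ρ(x₀) = 0 then ρ is continuous at x₀. -/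
open scoped BigOperators

theorem cocycle_continuousAt_of_zero
    {X : Type*} [TopologicalSpace X] [CompactSpace X] [T2Space X]
    (α : X → X) (hα : Continuous α)
    (hfin : ∃ N : ℕ, ∀ x : X, (α ⁻¹' {x}).Finite ∧ Nat.card ↥(α ⁻¹' {x}) ≤ N)
    (ρ : X → ℝ) (hρ : ∀ y : X, 0 ≤ ρ y)
    (A : C(X, ℝ) →ₗ[ℝ] C(X, ℝ))
    (hA : ∀ (f : C(X, ℝ)) (x : X), A f x = ∑ᶠ y ∈ α ⁻¹' {x}, ρ y * f y)
    (x₀ : X) (h0 : ρ x₀ = 0) :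
    ContinuousAt ρ x₀ := by
  obtain ⟨N, hN⟩ := hfin
  have hfib0 : (α ⁻¹' {α x₀}).Finite := (hN (α x₀)).1
  set S : Set X := (α ⁻¹' {α x₀}) \ {x₀} with hS
  have hSfin : S.Finite := hfib0.subset Set.diff_subset
  have hSclosed : IsClosed S := hSfin.isClosed
  have hx₀S : x₀ ∉ S := by simp [hS]
  obtain ⟨f, hf0, hf1, hfle⟩ := exists_continuous_zero_one_of_isClosed hSclosed
    isClosed_singleton (by simpa [Set.disjoint_singleton_right] using hx₀S)
  -- key pointwise bound
  have key : ∀ x : X, ρ x * f x ≤ (A f) (α x) := by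
    intro x
    rw [hA]
    have hfx : (α ⁻¹' {α x}).Finite := (hN (α x)).1
    rw [← hfx.coe_toFinset, finsum_mem_coe_finset]
    refine Finset.single_le_sum (f := fun y => ρ y * f y) (fun y _ => ?_) (hfx.mem_toFinset.mpr rfl)
    exact mul_nonneg (hρ y) (hfle y).1
  have hg0 : (A f) (α x₀) = 0 := by
    rw [hA, ← hfib0.coe_toFinset, finsum_mem_coe_finset]
    refine Finset.sum_eq_zero fun y hy => ?_
    rw [hfib0.mem_toFinset] at hy
    by_cases hyx : y = x₀
    · simp [hyx, h0]
    · have : f y = 0 := hf0 ⟨hy, hyx⟩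
      simp [this]
  -- set up squeeze
  have hgcont : Continuous fun x => (A f) (α x) := (A f).continuous.comp hα
  have hupper : Filter.Tendsto (fun x => 2 * (A f) (α x)) (nhds x₀) (nhds 0) := by
    have := (hgcont.tendsto x₀).const_mul (2 : ℝ)
    simpa [hg0] using this
  have hU : ∀ᶠ x in nhds x₀, (1 : ℝ) / 2 < f x := by
    have hfx₀ : f x₀ = 1 := hf1 rfl
    have : Filter.Tendsto f (nhds x₀) (nhds (1 : ℝ)) := by
      simpa [hfx₀] using (f.continuous.tendsto x₀)
    exact this.eventually_const_lt (by norm_num)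
  have hle : ∀ᶠ x in nhds x₀, ρ x ≤ 2 * (A f) (α x) := by
    filter_upwards [hU] with x hx
    have hk := key x
    nlinarith [hρ x]
  have : Filter.Tendsto ρ (nhds x₀) (nhds 0) := by
    refine tendsto_of_tendsto_of_tendsto_of_le_of_le' tendsto_const_nhds hupper
      (Filter.Eventually.of_forall fun x => hρ x) hle
  rw [ContinuousAt, h0]
  exact this
end

section
/- Let X be a compact Hausdorff space, α: X → X continuous with sup_x |α^{-1}(x)| < ∞, and A: C(X) → C(X) a transfer operator of the form [Af](x) = Σ_{y∈α^{-1}(x)} ρ(y)f(y) with ρ ≥ 0. If ρ(x₀) ≠ 0, then ρ is continuous at x₀ if and only if x₀ is a local injectivity point of α (there exists a neighborhood U of x₀ on which α is injective). -/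
open Topology

/-- finsum over a finite set equals the Finset sum over its `toFinset`. -/
private lemma finsum_mem_finite_eq {X : Type*} {S : Set X} (hS : S.Finite) (g : X → ℝ) :
    ∑ᶠ y ∈ S, g y = ∑ y ∈ hS.toFinset, g y := by
  rw [← finsum_mem_coe_finset, Set.Finite.coe_toFinset]

private lemma two_terms_le {X : Type*} {S : Set X} (hS : S.Finite) (g : X → ℝ)
    (hg : ∀ y, 0 ≤ g y) {u v : X} (hu : u ∈ S) (hv : v ∈ S) (huv : u ≠ v) :
    g u + g v ≤ ∑ᶠ y ∈ S, g y := by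
  classical
  rw [finsum_mem_finite_eq hS g]
  have h1 : ({u, v} : Finset X) ⊆ hS.toFinset := by
    intro y hy
    simp only [Finset.mem_insert, Finset.mem_singleton] at hy
    rcases hy with rfl | rfl <;> simpa using ‹_›
  calc g u + g v = ∑ y ∈ ({u, v} : Finset X), g y := (Finset.sum_pair huv).symm
    _ ≤ ∑ y ∈ hS.toFinset, g y :=
        Finset.sum_le_sum_of_subset_of_nonneg h1 (fun y _ _ => hg y)

theorem cocycle_continuousAt_iff_local_injectivity
    {X : Type*} [TopologicalSpace X] [CompactSpace X] [T2Space X]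
    (α : X → X) (hα : Continuous α)
    (hfin : ∃ N : ℕ, ∀ x : X, (α ⁻¹' {x}).Finite ∧ Nat.card ↥(α ⁻¹' {x}) ≤ N)
    (ρ : X → ℝ) (hρ : ∀ y : X, 0 ≤ ρ y)
    (A : C(X, ℝ) →ₗ[ℝ] C(X, ℝ))
    (hA : ∀ (f : C(X, ℝ)) (x : X), A f x = ∑ᶠ y ∈ α ⁻¹' {x}, ρ y * f y)
    (x₀ : X) (h0 : ρ x₀ ≠ 0) :
    ContinuousAt ρ x₀ ↔ ∃ U ∈ 𝓝 x₀, Set.InjOn α U := by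
  obtain ⟨N, hfin⟩ := hfin
  have hpos : 0 < ρ x₀ := lt_of_le_of_ne (hρ x₀) (Ne.symm h0)
  constructor
  · -- continuity at x₀ implies local injectivity
    intro hcont
    by_contra hni
    push_neg at hni
    -- fiber of α x₀
    set F : Set X := α ⁻¹' {α x₀} with hF
    have hFfin : F.Finite := (hfin (α x₀)).1
    have hx₀F : x₀ ∈ F := by simp [hF]
    -- open set avoiding the other fiber points
    have hclosed : IsClosed (F \ {x₀}) := ((hFfin.subset Set.diff_subset).isClosed)
    have hsopen : IsOpen (F \ {x₀})ᶜ := hclosed.isOpen_compl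
    have hx₀s : x₀ ∈ (F \ {x₀})ᶜ := by simp
    -- closed neighborhood inside
    obtain ⟨C, ⟨hCnhds, hCclosed⟩, hCs⟩ :=
      (closed_nhds_basis x₀).mem_iff.mp (hsopen.mem_nhds hx₀s)
    obtain ⟨f, hfsupp, hf1, hf01⟩ :=
      exists_tsupport_one_of_isOpen_isClosed hsopen
        (IsCompact.of_isClosed_subset isCompact_univ isClosed_closure (Set.subset_univ _))
        hCclosed hCs
    set g : X → ℝ := fun x => A f (α x) with hg
    have hgcont : Continuous g := (A f).continuous.comp hα
    have hgx₀ : g x₀ = ρ x₀ := by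
      rw [hg]
      simp only
      rw [hA, finsum_mem_finite_eq hFfin]
      rw [Finset.sum_eq_single x₀]
      · rw [hf1 (mem_of_mem_nhds hCnhds)]; simp
      · intro y hyF hy
        have hy' : y ∈ F \ {x₀} := ⟨hFfin.mem_toFinset.mp hyF, hy⟩
        have : f y = 0 := by
          apply image_eq_zero_of_notMem_tsupport
          intro hts
          exact (hfsupp hts) hy'
        simp [this]
      · intro h; exact absurd (hFfin.mem_toFinset.mpr hx₀F) h
    -- eventual bounds
    have E1 : ∀ᶠ x in 𝓝 x₀, g x < 3 / 2 * ρ x₀ := by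
      apply (hgcont.continuousAt (x := x₀)).eventually_lt_const
      rw [hgx₀]; linarith
    have E2 : ∀ᶠ x in 𝓝 x₀, 3 / 4 * ρ x₀ < ρ x := by
      apply hcont.eventually_const_lt
      linarith
    have E3 : ∀ᶠ x in 𝓝 x₀, x ∈ C := hCnhds
    have hni' := hni _ ((E1.and E2).and E3)
    rw [Set.InjOn] at hni'
    push_neg at hni'
    obtain ⟨u, ⟨⟨hgu, hρu⟩, hCu⟩, v, ⟨⟨hgv, hρv⟩, hCv⟩, hαuv, hne⟩ := hni'
    -- g u ≥ ρ u * f u + ρ v * f v = ρ u + ρ v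
    have hfib : (α ⁻¹' {α u}).Finite := (hfin (α u)).1
    have huf : u ∈ α ⁻¹' {α u} := by simp
    have hvf : v ∈ α ⁻¹' {α u} := by simp [hαuv]
    have hsum : ρ u * f u + ρ v * f v ≤ g u := by
      rw [hg]; simp only; rw [hA]
      exact two_terms_le hfib _ (fun y => mul_nonneg (hρ y) (hf01 y).1) huf hvf hne
    rw [hf1 hCu, hf1 hCv] at hsum
    simp only [Pi.one_apply, mul_one] at hsum
    linarith
  · -- local injectivity implies continuity at x₀
    rintro ⟨U, hU, hinj⟩
    obtain ⟨C, ⟨hCnhds, hCclosed⟩, hCU⟩ :=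
      (closed_nhds_basis x₀).mem_iff.mp (interior_mem_nhds.mpr hU)
    obtain ⟨f, hfsupp, hf1, hf01⟩ :=
      exists_tsupport_one_of_isOpen_isClosed isOpen_interior
        (IsCompact.of_isClosed_subset isCompact_univ isClosed_closure (Set.subset_univ _))
        hCclosed hCU
    set g : X → ℝ := fun x => A f (α x) with hg
    have hgcont : Continuous g := (A f).continuous.comp hα
    have heq : ∀ᶠ x in 𝓝 x₀, g x = ρ x := by
      filter_upwards [hCnhds] with x hxC
      have hfib : (α ⁻¹' {α x}).Finite := (hfin (α x)).1
      have hxU : x ∈ U := interior_subset (hCU hxC)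
      rw [hg]; simp only; rw [hA, finsum_mem_finite_eq hfib]
      rw [Finset.sum_eq_single x]
      · rw [hf1 hxC]; simp
      · intro y hyF hy
        have hyfib : y ∈ α ⁻¹' {α x} := hfib.mem_toFinset.mp hyF
        have hyU : y ∉ U := by
          intro hyU
          exact hy (hinj hyU hxU (by simpa using hyfib))
        have : f y = 0 := by
          apply image_eq_zero_of_notMem_tsupport
          intro hts
          exact hyU (interior_subset (hfsupp hts))
        simp [this]
      · intro h; exact absurd (hfib.mem_toFinset.mpr (by simp)) h
    exact (hgcont.continuousAt (x := x₀)).congr heq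
end

section
/- Let X be a compact Hausdorff space, α: X → X continuous with sup_x |α^{-1}(x)| < ∞, and A: C(X) → C(X) a transfer operator of the form [Af](x) = Σ_{y∈α^{-1}(x)} ρ(y)f(y) with ρ ≥ 0. If ρ(x₀) ≠ 0 then x₀ is a local openness point: for any neighborhood U of x₀, the image α(U) contains a neighborhood of α(x₀). -/
open Topology

theorem cocycle_nonzero_implies_local_openness
    {X : Type*} [TopologicalSpace X] [CompactSpace X] [T2Space X]
    (α : X → X) (hα : Continuous α)
    (hfin : ∃ N : ℕ, ∀ x : X, (α ⁻¹' {x}).Finite ∧ Nat.card ↥(α ⁻¹' {x}) ≤ N)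
    (ρ : X → ℝ) (hρ : ∀ y : X, 0 ≤ ρ y)
    (A : C(X, ℝ) →ₗ[ℝ] C(X, ℝ))
    (hA : ∀ (f : C(X, ℝ)) (x : X), A f x = ∑ᶠ y ∈ α ⁻¹' {x}, ρ y * f y)
    (x₀ : X) (h0 : ρ x₀ ≠ 0) :
    ∀ U ∈ 𝓝 x₀, α '' U ∈ 𝓝 (α x₀) := by
  intro U hU
  obtain ⟨N, hfib⟩ := hfin
  have hfibF : ∀ x : X, (α ⁻¹' {x}).Finite := fun x => (hfib x).1
  -- open V ⊆ U containing x₀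
  obtain ⟨V, hVU, hVopen, hx₀V⟩ := mem_nhds_iff.mp hU
  -- other points of the fiber of α x₀
  set F : Set X := α ⁻¹' {α x₀} \ {x₀} with hF
  have hFfin : F.Finite := (hfibF (α x₀)).subset Set.diff_subset
  have hFclosed : IsClosed F := hFfin.isClosed
  set W : Set X := V ∩ Fᶜ with hW
  have hWopen : IsOpen W := hVopen.inter hFclosed.isOpen_compl
  have hx₀W : x₀ ∈ W := ⟨hx₀V, fun h => h.2 rfl⟩
  -- Urysohn function
  obtain ⟨f, hf0, hf1, hf01⟩ := exists_continuous_zero_one_of_isClosed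
    hWopen.isClosed_compl isClosed_singleton
    (by rw [Set.disjoint_left]; intro a ha hb; rw [Set.mem_singleton_iff] at hb; exact ha (hb ▸ hx₀W))
  -- f vanishes outside W
  have hfW : ∀ y : X, f y ≠ 0 → y ∈ W := by
    intro y hy
    by_contra hyW
    exact hy (hf0 hyW)
  -- value at α x₀
  have hval : A f (α x₀) = ρ x₀ := by
    rw [hA]
    rw [← (hfibF (α x₀)).coe_toFinset, finsum_mem_coe_finset]
    rw [Finset.sum_eq_single x₀]
    · have : f x₀ = 1 := hf1 rfl
      simp [this]
    · intro b hb hbne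
      have hbF : b ∈ F := ⟨by simpa using (hfibF (α x₀)).mem_toFinset.mp hb, hbne⟩
      have : f b = 0 := by
        by_contra hfb
        exact (hfW b hfb).2 hbF
      simp [this]
    · intro h
      exact absurd ((hfibF (α x₀)).mem_toFinset.mpr (by simp)) h
  have hpos : 0 < A f (α x₀) := by
    rw [hval]
    exact lt_of_le_of_ne (hρ x₀) (Ne.symm h0)
  -- the open set where A f > 0
  have hopen : IsOpen {x | 0 < A f x} := isOpen_lt continuous_const (A f).continuous
  have hsub : {x | 0 < A f x} ⊆ α '' U := by
    intro x hx
    have hx' : A f x ≠ 0 := ne_of_gt hx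
    rw [hA] at hx'
    rw [← (hfibF x).coe_toFinset, finsum_mem_coe_finset] at hx'
    obtain ⟨y, hy, hyne⟩ := Finset.exists_ne_zero_of_sum_ne_zero hx'
    have hfy : f y ≠ 0 := fun h => hyne (by simp [h])
    have hyW : y ∈ W := hfW y hfy
    have hyx : α y = x := by simpa using (hfibF x).mem_toFinset.mp hy
    exact ⟨y, hVU hyW.1, hyx⟩
  exact Filter.mem_of_superset (hopen.mem_nhds hpos) hsub
end
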